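/- In an L-embedded Banach space, every sequence spanning ℓ¹ almost isometrically admits a subsequence which spans ℓ¹ asymptotically isometrically. -/

import Mathlib

open NormedSpace Filter Topology


set_option maxHeartbeats 1600000

namespace Stmt6Aux

variable {X : Type*} [NormedAddCommGroup X] [NormedSpace ℝ X]

variable {X : Type*} [NormedAddCommGroup X] [NormedSpace ℝ X]

lemma exists_ulim (U : Ultrafilter ℕ) (g : ℕ → ℝ) (c : ℝ) (hg : ∀ n, |g n| ≤ c) :
    ∃ r, |r| ≤ c ∧ Tendsto g (U : Filter ℕ) (nhds r) := by
  have h1 : (U.map g : Filter ℝ) ≤ Filter.principal (Set.Icc (-c) c) := by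
    rw [Filter.le_principal_iff]
    exact Filter.mem_map.2 (Filter.univ_mem' fun n => by
      simpa [Set.mem_Icc] using abs_le.1 (hg n))
  obtain ⟨r, hr, hle⟩ := isCompact_Icc.ultrafilter_le_nhds (U.map g) h1
  exact ⟨r, abs_le.2 ⟨(Set.mem_Icc.1 hr).1, (Set.mem_Icc.1 hr).2⟩, hle⟩

lemma exists_dual_functional {ι : Type*} (v : ι → X) (w : ι → ℝ) (c : ℝ) (hc : 0 < c)
    (hli : LinearIndependent ℝ v)
    (hb : ∀ α : ι →₀ ℝ, c * |∑ i ∈ α.support, α i * w i| ≤ ‖∑ i ∈ α.support, α i • v i‖) :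
    ∃ f : StrongDual ℝ X, ‖f‖ ≤ 1 / c ∧ ∀ i, f (v i) = w i := by
  classical
  set p : Submodule ℝ X := Submodule.span ℝ (Set.range v) with hp
  let B : Module.Basis ι ℝ p := Module.Basis.span hli
  have hBcoe : ∀ i, (B i : X) = v i := fun i => Module.Basis.coe_span_apply hli i
  let l : p →ₗ[ℝ] ℝ := B.constr ℝ w
  have hrep : ∀ z : p, (z : X) = ∑ i ∈ (B.repr z).support, (B.repr z) i • v i := by
    intro z
    have h1 : Finsupp.linearCombination ℝ B (B.repr z) = z := B.linearCombination_repr z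
    have h2 : ((Finsupp.linearCombination ℝ B (B.repr z) : p) : X)
        = ∑ i ∈ (B.repr z).support, (B.repr z) i • v i := by
      rw [Finsupp.linearCombination_apply, Finsupp.sum]
      push_cast
      exact Finset.sum_congr rfl fun i _ => by rw [hBcoe]
    rw [← h2, h1]
  have hlz : ∀ z : p, l z = ∑ i ∈ (B.repr z).support, (B.repr z) i * w i := by
    intro z
    rw [show l z = (B.repr z).sum fun i a => a • w i from B.constr_apply ℝ w z, Finsupp.sum]
    simp [smul_eq_mul]
  have hbound : ∀ z : p, ‖l z‖ ≤ (1 / c) * ‖z‖ := by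
    intro z
    have := hb (B.repr z)
    rw [← hrep z] at this
    have hz : ‖(z : X)‖ = ‖z‖ := rfl
    rw [hz] at this
    rw [Real.norm_eq_abs, hlz z, one_div, inv_mul_eq_div, le_div_iff₀ hc]
    linarith [this]
  let F : p →L[ℝ] ℝ := LinearMap.mkContinuous l (1 / c) hbound
  obtain ⟨f, hf1, hf2⟩ := exists_extension_norm_eq p F
  refine ⟨f, ?_, ?_⟩
  · rw [hf2]
    exact LinearMap.mkContinuous_norm_le l (by positivity) hbound
  · intro i
    have hmem : v i ∈ p := Submodule.subset_span ⟨i, rfl⟩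
    have : f (v i) = F ⟨v i, hmem⟩ := hf1 ⟨v i, hmem⟩
    rw [this]
    have hBi : (⟨v i, hmem⟩ : p) = B i := Subtype.ext (hBcoe i).symm
    rw [hBi]
    show l (B i) = w i
    exact B.constr_basis ℝ w i

lemma exists_xi (U : Ultrafilter ℕ) (x : ℕ → X) (hxb : ∀ n, ‖x n‖ ≤ 1) :
    ∃ ξ : StrongDual ℝ (StrongDual ℝ X), ‖ξ‖ ≤ 1 ∧
      ∀ f : StrongDual ℝ X, Tendsto (fun n => f (x n)) (U : Filter ℕ) (nhds (ξ f)) := by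
  have key : ∀ f : StrongDual ℝ X, ∃ r : ℝ, |r| ≤ ‖f‖ ∧
      Tendsto (fun n => f (x n)) (U : Filter ℕ) (nhds r) := by
    intro f
    refine exists_ulim U _ ‖f‖ fun n => ?_
    calc |f (x n)| ≤ ‖f‖ * ‖x n‖ := f.le_opNorm (x n)
    _ ≤ ‖f‖ * 1 := by
        have := f.opNorm_nonneg
        exact mul_le_mul_of_nonneg_left (hxb n) this
    _ = ‖f‖ := mul_one _
  choose lim hbd hlim using key
  have hadd : ∀ f g : StrongDual ℝ X, lim (f + g) = lim f + lim g := by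
    intro f g
    refine tendsto_nhds_unique (hlim (f + g)) ?_
    have := (hlim f).add (hlim g)
    simpa using this
  have hsmul : ∀ (c : ℝ) (f : StrongDual ℝ X), lim (c • f) = c * lim f := by
    intro c f
    refine tendsto_nhds_unique (hlim (c • f)) ?_
    have := (hlim f).const_mul c
    simpa using this
  let L : StrongDual ℝ X →ₗ[ℝ] ℝ :=
    { toFun := lim
      map_add' := hadd
      map_smul' := fun c f => by simpa using hsmul c f }
  have hLb : ∀ f : StrongDual ℝ X, ‖L f‖ ≤ 1 * ‖f‖ := fun f => by
    simpa [L, Real.norm_eq_abs] using hbd f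
  refine ⟨LinearMap.mkContinuous L 1 hLb, LinearMap.mkContinuous_norm_le L zero_le_one hLb,
    fun f => hlim f⟩

lemma norm_bidual_le (U : Ultrafilter ℕ) (z : ℕ → X) (Z : StrongDual ℝ (StrongDual ℝ X))
    (hZ : ∀ f : StrongDual ℝ X, Tendsto (fun n => f (z n)) (U : Filter ℕ) (nhds (Z f)))
    (c : ℝ) (hc : 0 ≤ c) (hmem : {n | ‖z n‖ ≤ c} ∈ U) : ‖Z‖ ≤ c := by
  refine ContinuousLinearMap.opNorm_le_bound Z hc fun f => ?_
  have h1 : Tendsto (fun n => |f (z n)|) (U : Filter ℕ) (nhds |Z f|) := (hZ f).abs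
  have h2 : ∀ᶠ n in (U : Filter ℕ), |f (z n)| ≤ c * ‖f‖ := by
    filter_upwards [hmem] with n hn
    calc |f (z n)| ≤ ‖f‖ * ‖z n‖ := f.le_opNorm (z n)
    _ ≤ ‖f‖ * c := mul_le_mul_of_nonneg_left hn f.opNorm_nonneg
    _ = c * ‖f‖ := mul_comm _ _
  have := le_of_tendsto h1 h2
  simpa [Real.norm_eq_abs] using this

lemma xi_eval (U : Ultrafilter ℕ) (hU : (U : Filter ℕ) ≤ atTop) (x : ℕ → X)
    (ξ : StrongDual ℝ (StrongDual ℝ X))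
    (hξ : ∀ f : StrongDual ℝ X, Tendsto (fun n => f (x n)) (U : Filter ℕ) (nhds (ξ f)))
    (f : StrongDual ℝ X) (σ : ℝ) (m : ℕ) (hf : ∀ n ≥ m, f (x n) = σ) : ξ f = σ := by
  refine tendsto_nhds_unique (hξ f) ?_
  have hev : ∀ᶠ n in (U : Filter ℕ), f (x n) = σ := by
    have : ∀ᶠ n in atTop, f (x n) = σ := by
      filter_upwards [eventually_ge_atTop m] with n hn using hf n hn
    exact this.filter_mono hU
  exact Tendsto.congr' (hev.mono fun n hn => hn.symm) tendsto_const_nhds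

lemma keystep (x : ℕ → X) (hxb : ∀ n, ‖x n‖ ≤ 1) (F : Filter ℕ) [F.NeBot]
    (htail : ∀ N : ℕ, {n | N ≤ n} ∈ F)
    (hcore : ∀ (w : X) (t : ℝ) (ε : ℝ), 0 < ε → {n | ‖w‖ + |t| - ε < ‖w + t • x n‖} ∈ F)
    (k : ℕ) (u : Fin k → X) (hu : ∀ i, ‖u i‖ ≤ 1) (ε : ℝ) (hε : 0 < ε) (N₀ : ℕ) :
    ∃ n, N₀ ≤ n ∧ ∀ (β : Fin k → ℝ) (t : ℝ),
      ‖∑ i, β i • u i‖ + |t| - ε * ((∑ i, |β i|) + |t|) ≤ ‖(∑ i, β i • u i) + t • x n‖ := by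
  classical
  set E := (Fin k → ℝ) × ℝ with hE
  let w : E → X := fun p => ∑ i, p.1 i • u i
  -- Lipschitz-type bound for w
  have hwlip : ∀ p q : E, ‖w p - w q‖ ≤ (k : ℝ) * dist p q := by
    intro p q
    have : w p - w q = ∑ i, (p.1 i - q.1 i) • u i := by
      rw [← Finset.sum_sub_distrib]
      exact Finset.sum_congr rfl fun i _ => (sub_smul _ _ _).symm
    rw [this]
    calc ‖∑ i, (p.1 i - q.1 i) • u i‖ ≤ ∑ i, ‖(p.1 i - q.1 i) • u i‖ :=
          norm_sum_le _ _
    _ ≤ ∑ _i : Fin k, dist p q := by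
        refine Finset.sum_le_sum fun i _ => ?_
        rw [norm_smul]
        calc ‖p.1 i - q.1 i‖ * ‖u i‖ ≤ ‖p.1 i - q.1 i‖ * 1 :=
              mul_le_mul_of_nonneg_left (hu i) (norm_nonneg _)
        _ = ‖(p.1 - q.1) i‖ := by rw [mul_one]; rfl
        _ ≤ ‖p.1 - q.1‖ := norm_le_pi_norm _ i
        _ = dist p.1 q.1 := (dist_eq_norm _ _).symm
        _ ≤ dist p q := by
            rw [Prod.dist_eq]
            exact le_max_left _ _
    _ = (k : ℝ) * dist p q := by
        rw [Finset.sum_const, Finset.card_univ, Fintype.card_fin, nsmul_eq_mul]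
  have hsnd : ∀ p q : E, |p.2 - q.2| ≤ dist p q := by
    intro p q
    calc |p.2 - q.2| = dist p.2 q.2 := (Real.dist_eq _ _).symm
    _ ≤ dist p q := by rw [Prod.dist_eq]; exact le_max_right _ _
  -- the functions
  let Φ : ℕ → E → ℝ := fun n p => ‖w p + p.2 • x n‖
  let Ψ : E → ℝ := fun p => ‖w p‖ + |p.2|
  have hlip : ∀ (n : ℕ) (p q : E), Φ n p - Ψ p - (2 * (k : ℝ) + 2) * dist p q ≤ Φ n q - Ψ q := by
    intro n p q
    have h1 : Φ n p - Φ n q ≤ ((k : ℝ) + 1) * dist p q := by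
      have : Φ n p - Φ n q ≤ ‖(w p + p.2 • x n) - (w q + q.2 • x n)‖ :=
        norm_sub_norm_le _ _
      refine this.trans ?_
      have he : (w p + p.2 • x n) - (w q + q.2 • x n) = (w p - w q) + (p.2 - q.2) • x n := by
        rw [sub_smul]; abel
      rw [he]
      calc ‖(w p - w q) + (p.2 - q.2) • x n‖ ≤ ‖w p - w q‖ + ‖(p.2 - q.2) • x n‖ :=
            norm_add_le _ _
      _ ≤ (k : ℝ) * dist p q + |p.2 - q.2| * 1 := by
          refine add_le_add (hwlip p q) ?_
          rw [norm_smul, Real.norm_eq_abs]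
          exact mul_le_mul_of_nonneg_left (hxb n) (abs_nonneg _)
      _ ≤ (k : ℝ) * dist p q + dist p q * 1 := by
          have := hsnd p q
          nlinarith [dist_nonneg (x := p) (y := q)]
      _ = ((k : ℝ) + 1) * dist p q := by ring
    have h2 : Ψ q - Ψ p ≤ ((k : ℝ) + 1) * dist p q := by
      have ha : ‖w q‖ - ‖w p‖ ≤ (k : ℝ) * dist p q := by
        have := norm_sub_norm_le (w q) (w p)
        have h' := hwlip q p
        rw [dist_comm q p] at h'
        linarith
      have hb : |q.2| - |p.2| ≤ dist p q := by
        have := abs_sub_abs_le_abs_sub q.2 p.2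
        have h' := hsnd q p
        rw [dist_comm q p] at h'
        linarith
      simp only [Ψ]
      linarith
    nlinarith [dist_nonneg (x := p) (y := q)]
  -- compact ball and finite subcover
  have hA : IsCompact (Metric.closedBall (0 : E) 1) := isCompact_closedBall _ _
  set r := ε / (4 * ((k : ℝ) + 1)) with hr
  have hrpos : 0 < r := by positivity
  obtain ⟨T, hT⟩ := hA.elim_finite_subcover (fun p : E => Metric.ball p r)
    (fun p => Metric.isOpen_ball)
    (fun q _ => Set.mem_iUnion.2 ⟨q, Metric.mem_ball_self hrpos⟩)
  -- the good set of indices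
  have hSmem : ∀ p : E, {n | Ψ p - ε / 2 < Φ n p} ∈ F := by
    intro p
    exact hcore (w p) p.2 (ε / 2) (by positivity)
  have hGmem : ((⋂ p ∈ T, {n | Ψ p - ε / 2 < Φ n p}) ∩ {n | N₀ ≤ n}) ∈ F := by
    refine Filter.inter_mem ?_ (htail N₀)
    exact (Filter.biInter_mem T.finite_toSet).2 fun p _ => hSmem p
  obtain ⟨n, hn⟩ := Filter.nonempty_of_mem hGmem
  refine ⟨n, hn.2, ?_⟩
  intro β t
  -- scale down to the unit ball
  rcases eq_or_ne (β, t) (0 : E) with h0 | h0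
  · have hβ : β = 0 := congrArg Prod.fst h0
    have ht : t = 0 := congrArg Prod.snd h0
    subst hβ; subst ht
    simp
  · set p : E := (β, t) with hpdef
    have hc : 0 < ‖p‖ := norm_pos_iff.2 h0
    set q : E := ‖p‖⁻¹ • p with hq
    have hqball : q ∈ Metric.closedBall (0 : E) 1 := by
      rw [Metric.mem_closedBall, dist_zero_right, hq, norm_smul]
      rw [norm_inv, norm_norm]
      rw [inv_mul_cancel₀ (ne_of_gt hc)]
    obtain ⟨p₀, hp₀T, hqp₀⟩ : ∃ p₀ ∈ T, q ∈ Metric.ball p₀ r := by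
      have := hT hqball
      simpa using this
    have hn₀ : Ψ p₀ - ε / 2 < Φ n p₀ := by
      have := (Set.mem_iInter₂.1 hn.1) p₀ hp₀T
      exact this
    have hdist : dist p₀ q < r := by rw [dist_comm]; exact hqp₀
    have hds : (2 * (k : ℝ) + 2) * dist p₀ q ≤ (2 * (k : ℝ) + 2) * r :=
      mul_le_mul_of_nonneg_left hdist.le (by positivity)
    have hrval : (2 * (k : ℝ) + 2) * r = ε / 2 := by
      rw [hr]
      have hk1 : ((k : ℝ) + 1) ≠ 0 := by positivity
      field_simp
      ring
    have hkey : -ε ≤ Φ n q - Ψ q := by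
      have h5 : -ε ≤ Φ n p₀ - Ψ p₀ - (2 * (k : ℝ) + 2) * dist p₀ q := by
        have b1 : Ψ p₀ - ε / 2 < Φ n p₀ := hn₀
        have b2 : (2 * (k : ℝ) + 2) * dist p₀ q ≤ ε / 2 := le_of_le_of_eq hds hrval
        set A := Φ n p₀ with hA1
        set B := Ψ p₀ with hB1
        set D := (2 * (k : ℝ) + 2) * dist p₀ q with hD1
        clear_value A B D
        linarith only [b1, b2]
      exact le_trans h5 (hlip n p₀ q)
    -- homogeneity
    have hwq : w p = ‖p‖ • w q := by
      simp only [w, hq]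
      rw [Finset.smul_sum]
      refine Finset.sum_congr rfl fun i _ => ?_
      have hqi : (‖p‖⁻¹ • p).1 i = ‖p‖⁻¹ * p.1 i := rfl
      rw [hqi, smul_smul, mul_inv_cancel_left₀ (ne_of_gt hc)]
    have hq2 : ‖p‖ * q.2 = p.2 := by
      have : q.2 = ‖p‖⁻¹ * p.2 := rfl
      rw [this, mul_inv_cancel_left₀ (ne_of_gt hc)]
    have hΦ : Φ n p = ‖p‖ * Φ n q := by
      show ‖w p + p.2 • x n‖ = ‖p‖ * ‖w q + q.2 • x n‖
      rw [← norm_smul_of_nonneg (norm_nonneg p), smul_add, ← hwq, smul_smul, hq2]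
    have e3 : ‖p‖ * |q.2| = |p.2| := by
      rw [← hq2, abs_mul, abs_of_nonneg (norm_nonneg p)]
    have hΨ : Ψ p = ‖p‖ * Ψ q := by
      show ‖w p‖ + |p.2| = ‖p‖ * (‖w q‖ + |q.2|)
      rw [mul_add, ← norm_smul_of_nonneg (norm_nonneg p), ← hwq, e3]
    have hfin : Φ n p - Ψ p ≥ -ε * ‖p‖ := by
      rw [hΦ, hΨ]
      nlinarith [hkey, hc]
    have hnorm_le : ‖p‖ ≤ (∑ i, |β i|) + |t| := by
      rw [hpdef, Prod.norm_def]
      refine max_le ?_ ?_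
      · refine (pi_norm_le_iff_of_nonneg ?_).2 fun i => ?_
        · positivity
        · calc ‖β i‖ = |β i| := rfl
          _ ≤ ∑ j, |β j| := Finset.single_le_sum (fun j _ => abs_nonneg (β j)) (Finset.mem_univ i)
          _ ≤ (∑ j, |β j|) + |t| := le_add_of_nonneg_right (abs_nonneg t)
      · show ‖t‖ ≤ (∑ j, |β j|) + |t|
        rw [Real.norm_eq_abs]
        exact le_add_of_nonneg_left (Finset.sum_nonneg fun j _ => abs_nonneg (β j))
    have hid1 : Φ n p = ‖(∑ i, β i • u i) + t • x n‖ := rfl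
    have hid2 : Ψ p = ‖∑ i, β i • u i‖ + |t| := rfl
    have hεnn : -ε * ((∑ i, |β i|) + |t|) ≤ -ε * ‖p‖ :=
      mul_le_mul_of_nonpos_left hnorm_le (by linarith)
    linarith [hfin, hεnn, hid1, hid2]


noncomputable def preAux (base : ℕ) (step : (ℕ → ℕ) → ℕ → ℕ) : ℕ → ℕ → ℕ
  | 0, _ => base
  | (j+1), i => if i ≤ j then preAux base step j i else step (fun i' => preAux base step j i') j

lemma preAux_succ (b : ℕ) (st : (ℕ → ℕ) → ℕ → ℕ) (j i : ℕ) :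
    preAux b st (j+1) i = if i ≤ j then preAux b st j i
      else st (fun i' => preAux b st j i') j := rfl

lemma preAux_agree (b : ℕ) (st : (ℕ → ℕ) → ℕ → ℕ) :
    ∀ j i, i ≤ j → preAux b st j i = preAux b st i i := by
  intro j
  induction j with
  | zero => intro i hi; rw [Nat.le_zero.1 hi]
  | succ j ih =>
    intro i hi
    rcases Nat.lt_or_ge i (j+1) with hlt | hge
    · rw [preAux_succ, if_pos (Nat.lt_succ_iff.1 hlt), ih i (Nat.lt_succ_iff.1 hlt)]
    · have : i = j + 1 := le_antisymm hi hge
      rw [this]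

lemma option_support_subset (α : Option ℕ →₀ ℝ) :
    ∃ K : ℕ, (∀ i, K ≤ i → α (some i) = 0) ∧
      α.support ⊆ insert none ((Finset.range K).image some) := by
  classical
  refine ⟨(Finset.eraseNone α.support).sup id + 1, ?_, ?_⟩
  · intro i hi
    by_contra hne
    have h1 : some i ∈ α.support := Finsupp.mem_support_iff.2 hne
    have h2 : i ∈ Finset.eraseNone α.support := Finset.mem_eraseNone.2 h1
    have h3 : i ≤ (Finset.eraseNone α.support).sup id := Finset.le_sup (f := id) h2
    omega
  · intro o ho
    match o with
    | none => exact Finset.mem_insert_self _ _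
    | some i =>
      refine Finset.mem_insert_of_mem (Finset.mem_image.2 ⟨i, ?_, rfl⟩)
      have h2 : i ∈ Finset.eraseNone α.support := Finset.mem_eraseNone.2 ho
      have h3 : i ≤ (Finset.eraseNone α.support).sup id := Finset.le_sup (f := id) h2
      exact Finset.mem_range.2 (by omega)

lemma exists_norming_functional {X : Type*} [NormedAddCommGroup X] [NormedSpace ℝ X]
    (x : ℕ → X) (dm : ℝ) (hdm : 0 < 1 - dm) (y : X) (s : ℝ) (hs0 : 0 ≤ s)
    (hslt : s < 1 - dm) (m : ℕ)
    (hstar : ∀ (K : ℕ) (c : ℕ → ℝ) (β : ℝ),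
      (1 - dm) * ((∑ i ∈ Finset.range K, |c i|) + |β|)
        ≤ ‖(∑ i ∈ Finset.range K, c i • x (m + i)) + β • y‖ + |β| * s) :
    ∃ f : StrongDual ℝ X, ‖f‖ ≤ 1 / (1 - dm) ∧ (∀ i : ℕ, f (x (m + i)) = 1) ∧ f y = 0 := by
  classical
  set v : Option ℕ → X := fun o => o.elim y (fun i => x (m + i)) with hv
  set w : Option ℕ → ℝ := fun o => o.elim 0 (fun _ => 1) with hw
  have hkey : ∀ α : Option ℕ →₀ ℝ, ∃ K : ℕ, (∀ i, K ≤ i → α (some i) = 0) ∧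
      (∑ o ∈ α.support, α o • v o)
        = (∑ i ∈ Finset.range K, α (some i) • x (m + i)) + α none • y ∧
      (∑ o ∈ α.support, α o * w o) = ∑ i ∈ Finset.range K, α (some i) := by
    intro α
    obtain ⟨K, hK0, hsub⟩ := option_support_subset α
    have hnone : none ∉ (Finset.range K).image some := by simp
    have hinj : ∀ a ∈ Finset.range K, ∀ b ∈ Finset.range K, some a = some b → a = b :=
      fun a _ b _ hab => Option.some_injective ℕ hab
    refine ⟨K, hK0, ?_, ?_⟩
    · have e1 : ∑ o ∈ α.support, α o • v o
          = ∑ o ∈ insert none ((Finset.range K).image some), α o • v o :=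
        Finset.sum_subset hsub fun o _ ho => by
          rw [Finsupp.notMem_support_iff.1 ho, zero_smul]
      rw [e1, Finset.sum_insert hnone, Finset.sum_image hinj]
      have hve : ∀ i, v (some i) = x (m + i) := fun i => rfl
      simp only [hve]
      rw [add_comm]
      rfl
    · have e1 : ∑ o ∈ α.support, α o * w o
          = ∑ o ∈ insert none ((Finset.range K).image some), α o * w o :=
        Finset.sum_subset hsub fun o _ ho => by
          rw [Finsupp.notMem_support_iff.1 ho, zero_mul]
      rw [e1, Finset.sum_insert hnone, Finset.sum_image hinj]
      have h0 : α none * w none = 0 := by simp [hw]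
      have h1 : ∀ i, w (some i) = 1 := fun i => rfl
      simp only [h0, h1, mul_one, zero_add]
  have hli : LinearIndependent ℝ v := by
    rw [linearIndependent_iff]
    intro l hl
    obtain ⟨K, hK0, hvec, _⟩ := hkey l
    have h0 : Finsupp.linearCombination ℝ v l = ∑ o ∈ l.support, l o • v o := by
      rw [Finsupp.linearCombination_apply]; rfl
    rw [h0, hvec] at hl
    have h1 := hstar K (fun i => l (some i)) (l none)
    rw [hl, norm_zero, zero_add, mul_add] at h1
    set S := ∑ i ∈ Finset.range K, |l (some i)| with hS
    set T := |l none| with hT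
    have h5 : 0 ≤ S := Finset.sum_nonneg fun i _ => abs_nonneg _
    have h6 : 0 ≤ T := abs_nonneg _
    have h4 : T * s ≤ T * (1 - dm) := mul_le_mul_of_nonneg_left hslt.le h6
    have h8 : (1 - dm) * S ≤ 0 := by linarith [mul_comm (1 - dm) T]
    have hS0 : S ≤ 0 := le_of_mul_le_mul_left (by simpa using h8) hdm
    have hSz : S = 0 := le_antisymm hS0 h5
    have hTz : T = 0 := by
      by_contra hTne
      have hTpos : 0 < T := lt_of_le_of_ne h6 (Ne.symm hTne)
      have h10 : T * s < T * (1 - dm) := by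
        exact mul_lt_mul_of_pos_left hslt hTpos
      have h12 : (1 - dm) * S = 0 := by rw [hSz, mul_zero]
      linarith [mul_comm (1 - dm) T]
    have hz3 : ∀ i ∈ Finset.range K, |l (some i)| = 0 :=
      (Finset.sum_eq_zero_iff_of_nonneg fun i _ => abs_nonneg _).1 hSz
    ext o
    match o with
    | none => simpa using abs_eq_zero.1 hTz
    | some i =>
      rcases lt_or_ge i K with hi | hi
      · simpa using abs_eq_zero.1 (hz3 i (Finset.mem_range.2 hi))
      · simpa using hK0 i hi
  have hb : ∀ α : Option ℕ →₀ ℝ, (1 - dm) * |∑ o ∈ α.support, α o * w o|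
      ≤ ‖∑ o ∈ α.support, α o • v o‖ := by
    intro α
    obtain ⟨K, hK0, hvec, hsc⟩ := hkey α
    rw [hvec, hsc]
    have h1 := hstar K (fun i => α (some i)) (α none)
    rw [mul_add] at h1
    have h2 : |∑ i ∈ Finset.range K, α (some i)| ≤ ∑ i ∈ Finset.range K, |α (some i)| :=
      Finset.abs_sum_le_sum_abs _ _
    have h3 : |α none| * s ≤ |α none| * (1 - dm) :=
      mul_le_mul_of_nonneg_left hslt.le (abs_nonneg _)
    have h4 : (1 - dm) * |∑ i ∈ Finset.range K, α (some i)|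
        ≤ (1 - dm) * ∑ i ∈ Finset.range K, |α (some i)| :=
      mul_le_mul_of_nonneg_left h2 hdm.le
    linarith [mul_comm (1 - dm) |α none|]
  obtain ⟨f, hfn, hfv⟩ := exists_dual_functional v w (1 - dm) hdm hli hb
  exact ⟨f, hfn, fun i => hfv (some i), hfv none⟩

end Stmt6Aux


/-- A sequence spans `ℓ¹` asymptotically isometrically. -/
def SpansL1Asymptotically {X : Type*} [NormedAddCommGroup X] [NormedSpace ℝ X]
    (x : ℕ → X) : Prop :=
  ∃ δ : ℕ → ℝ, (∀ n, 0 ≤ δ n ∧ δ n < 1) ∧ Tendsto δ atTop (nhds 0) ∧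
    ∀ (N : ℕ) (α : ℕ → ℝ),
      (∑ n ∈ Finset.range N, (1 - δ n) * |α n|) ≤ ‖∑ n ∈ Finset.range N, α n • x n‖ ∧
      ‖∑ n ∈ Finset.range N, α n • x n‖ ≤ ∑ n ∈ Finset.range N, |α n|

/-- A sequence spans `ℓ¹` almost isometrically. -/
def SpansL1AlmostIsometrically {X : Type*} [NormedAddCommGroup X] [NormedSpace ℝ X]
    (x : ℕ → X) : Prop :=
  ∃ δ : ℕ → ℝ, (∀ n, 0 ≤ δ n ∧ δ n < 1) ∧ Tendsto δ atTop (nhds 0) ∧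
    ∀ (m M : ℕ) (α : ℕ → ℝ),
      (1 - δ m) * (∑ n ∈ Finset.Icc m M, |α n|) ≤ ‖∑ n ∈ Finset.Icc m M, α n • x n‖ ∧
      ‖∑ n ∈ Finset.Icc m M, α n • x n‖ ≤ ∑ n ∈ Finset.Icc m M, |α n|

/-- A sequence spans `c₀` asymptotically isometrically. -/
def SpansC0Asymptotically {X : Type*} [NormedAddCommGroup X] [NormedSpace ℝ X]
    (z : ℕ → X) : Prop :=
  ∃ δ : ℕ → ℝ, (∀ n, 0 ≤ δ n ∧ δ n < 1) ∧ Tendsto δ atTop (nhds 0) ∧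
    ∀ (N : ℕ) (hN : N ≠ 0) (α : ℕ → ℝ),
      ((Finset.range N).sup' (Finset.nonempty_range_iff.mpr hN)
          (fun n => (1 - δ n) * |α n|)) ≤ ‖∑ n ∈ Finset.range N, α n • z n‖ ∧
      ‖∑ n ∈ Finset.range N, α n • z n‖ ≤
        (Finset.range N).sup' (Finset.nonempty_range_iff.mpr hN)
          (fun n => (1 + δ n) * |α n|)

/-- `P` is an L-projection: an idempotent bounded operator with
`‖ξ‖ = ‖Pξ‖ + ‖ξ - Pξ‖` for all `ξ`. -/
def IsLProjection {E : Type*} [NormedAddCommGroup E] [NormedSpace ℝ E]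
    (P : E →L[ℝ] E) : Prop :=
  (∀ ξ, P (P ξ) = P ξ) ∧ ∀ ξ, ‖ξ‖ = ‖P ξ‖ + ‖ξ - P ξ‖

/-- `X` is L-embedded: the canonical image of `X` in its bidual is the range of an
L-projection. -/
def IsLEmbedded (X : Type*) [NormedAddCommGroup X] [NormedSpace ℝ X] : Prop :=
  ∃ P : StrongDual ℝ (StrongDual ℝ X) →L[ℝ] StrongDual ℝ (StrongDual ℝ X),
    (∀ ξ, P (P ξ) = P ξ) ∧ (∀ ξ, ‖ξ‖ = ‖P ξ‖ + ‖ξ - P ξ‖) ∧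
      Set.range P = Set.range (inclusionInDoubleDual ℝ X)

/-- `X` is M-embedded: the annihilator of `X` in `X'''` is the range of an
L-projection on `X'''`. -/
def IsMEmbedded (X : Type*) [NormedAddCommGroup X] [NormedSpace ℝ X] : Prop :=
  letI : NormedAddCommGroup (StrongDual ℝ (StrongDual ℝ X)) := inferInstance
  letI : NormedSpace ℝ (StrongDual ℝ (StrongDual ℝ X)) := inferInstance
  ∃ P : StrongDual ℝ (StrongDual ℝ (StrongDual ℝ X)) →L[ℝ] StrongDual ℝ (StrongDual ℝ (StrongDual ℝ X)),
    (∀ φ, P (P φ) = P φ) ∧ (∀ φ, ‖φ‖ = ‖P φ‖ + ‖φ - P φ‖) ∧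
      Set.range P = {φ | ∀ x : X, φ (inclusionInDoubleDual ℝ X x) = 0}

/-- `X` fails the fixed point property: there are a nonempty closed bounded convex set and
a contractive self-map without fixed point. -/
def FailsFPP (X : Type*) [NormedAddCommGroup X] [NormedSpace ℝ X] : Prop :=
  ∃ C : Set X, C.Nonempty ∧ IsClosed C ∧ Bornology.IsBounded C ∧ Convex ℝ C ∧
    ∃ f : X → X, Set.MapsTo f C C ∧
      (∀ x ∈ C, ∀ y ∈ C, x ≠ y → ‖f x - f y‖ < ‖x - y‖) ∧
      ∀ x ∈ C, f x ≠ x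

theorem stmt6 {X : Type*} [NormedAddCommGroup X] [NormedSpace ℝ X] [CompleteSpace X] (hX : IsLEmbedded X)
    (x : ℕ → X) (h : SpansL1AlmostIsometrically x) :
    ∃ k : ℕ → ℕ, StrictMono k ∧ SpansL1Asymptotically (x ∘ k) := by
  classical
  obtain ⟨P, hP1, hP2, hPr⟩ := hX
  obtain ⟨δ, hδ01, hδlim, hδ⟩ := h
  set J : X →L[ℝ] StrongDual ℝ (StrongDual ℝ X) := inclusionInDoubleDual ℝ X with hJdef
  have hJnorm : ∀ z : X, ‖J z‖ = ‖z‖ := fun z => (inclusionInDoubleDualLi ℝ (E := X)).norm_map z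
  have hJapp : ∀ (z : X) (f : StrongDual ℝ X), J z f = f z := fun z f => rfl
  have hδpos : ∀ m, 0 < 1 - δ m := fun m => by linarith [(hδ01 m).2]
  have hxb : ∀ n, ‖x n‖ ≤ 1 := by
    intro n
    have := (hδ n n (fun _ => 1)).2
    simpa using this
  -- lower bound, reindexed over `range`
  have hlowR : ∀ (m K : ℕ) (c : ℕ → ℝ),
      (1 - δ m) * (∑ i ∈ Finset.range K, |c i|) ≤ ‖∑ i ∈ Finset.range K, c i • x (m + i)‖ := by
    intro m K c
    set α : ℕ → ℝ := fun n => if n < m + K then c (n - m) else 0 with hα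
    have h1 := (hδ m (m + K) α).1
    have e0 : Finset.Icc m (m + K) = Finset.Ico m (m + (K + 1)) := by
      rw [← Nat.add_assoc]
      rw [Finset.Ico_add_one_right_eq_Icc]
    have hval : ∀ i, i < K → α (m + i) = c i := by
      intro i hi
      simp only [hα]
      rw [if_pos (by omega), Nat.add_sub_cancel_left]
    have hvalK : α (m + K) = 0 := by simp [hα]
    have e1 : ∑ n ∈ Finset.Icc m (m + K), α n • x n
        = ∑ i ∈ Finset.range K, c i • x (m + i) := by
      rw [e0, Finset.sum_Ico_eq_sum_range]
      have e2 : m + (K + 1) - m = K + 1 := by omega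
      rw [e2, Finset.sum_range_succ, hvalK, zero_smul, add_zero]
      exact Finset.sum_congr rfl fun i hi => by rw [hval i (Finset.mem_range.1 hi)]
    have e3 : ∑ n ∈ Finset.Icc m (m + K), |α n| = ∑ i ∈ Finset.range K, |c i| := by
      rw [e0, Finset.sum_Ico_eq_sum_range]
      have e2 : m + (K + 1) - m = K + 1 := by omega
      rw [e2, Finset.sum_range_succ, hvalK, abs_zero, add_zero]
      exact Finset.sum_congr rfl fun i hi => by rw [hval i (Finset.mem_range.1 hi)]
    rw [e1, e3] at h1
    exact h1
  -- lower bound in finsupp form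
  have hlowF : ∀ (m : ℕ) (α : ℕ →₀ ℝ),
      (1 - δ m) * (∑ i ∈ α.support, |α i|) ≤ ‖∑ i ∈ α.support, α i • x (m + i)‖ := by
    intro m α
    set K := α.support.sup id + 1 with hK
    have hsub : α.support ⊆ Finset.range K := by
      intro i hi
      exact Finset.mem_range.2 (Nat.lt_succ_of_le (Finset.le_sup (f := id) hi))
    have e1 : ∑ i ∈ α.support, α i • x (m + i) = ∑ i ∈ Finset.range K, α i • x (m + i) :=
      Finset.sum_subset hsub fun i _ hi => by
        rw [Finsupp.notMem_support_iff.1 hi, zero_smul]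
    have e2 : ∑ i ∈ α.support, |α i| = ∑ i ∈ Finset.range K, |α i| :=
      Finset.sum_subset hsub fun i _ hi => by
        rw [Finsupp.notMem_support_iff.1 hi, abs_zero]
    rw [e1, e2]
    exact hlowR m K α
  -- linear independence of the tails
  have hlin : ∀ m : ℕ, LinearIndependent ℝ (fun i : ℕ => x (m + i)) := by
    intro m
    rw [linearIndependent_iff]
    intro l hl
    have h0 : Finsupp.linearCombination ℝ (fun i : ℕ => x (m + i)) l
        = ∑ i ∈ l.support, l i • x (m + i) := by
      rw [Finsupp.linearCombination_apply]
      rfl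
    have h1 := hlowF m l
    rw [← h0, hl, norm_zero] at h1
    have h2 : ∑ i ∈ l.support, |l i| ≤ 0 := by
      nlinarith [hδpos m, Finset.sum_nonneg (fun i (_ : i ∈ l.support) => abs_nonneg (l i))]
    have h3 : ∀ i ∈ l.support, |l i| = 0 := by
      intro i hi
      have := (Finset.sum_eq_zero_iff_of_nonneg
        (fun i (_ : i ∈ l.support) => abs_nonneg (l i))).1
        (le_antisymm h2 (Finset.sum_nonneg fun i _ => abs_nonneg (l i)))
      exact this i hi
    ext i
    by_cases hi : i ∈ l.support
    · simpa using abs_eq_zero.1 (h3 i hi)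
    · simpa using Finsupp.notMem_support_iff.1 hi
  -- Hahn-Banach: functionals with prescribed values on a tail
  have hpat : ∀ (m : ℕ) (t : ℕ → ℝ), (∀ n, |t n| ≤ 1) →
      ∃ f : StrongDual ℝ X, ‖f‖ ≤ 1 / (1 - δ m) ∧ ∀ n, m ≤ n → f (x n) = t n := by
    intro m t ht
    have hb : ∀ α : ℕ →₀ ℝ, (1 - δ m) * |∑ i ∈ α.support, α i * t (m + i)|
        ≤ ‖∑ i ∈ α.support, α i • x (m + i)‖ := by
      intro α
      refine le_trans ?_ (hlowF m α)
      refine mul_le_mul_of_nonneg_left ?_ (hδpos m).le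
      refine le_trans (Finset.abs_sum_le_sum_abs _ _) ?_
      refine Finset.sum_le_sum fun i _ => ?_
      rw [abs_mul]
      calc |α i| * |t (m + i)| ≤ |α i| * 1 :=
            mul_le_mul_of_nonneg_left (ht (m + i)) (abs_nonneg _)
      _ = |α i| := mul_one _
    obtain ⟨f, hf1, hf2⟩ := Stmt6Aux.exists_dual_functional (fun i : ℕ => x (m + i))
      (fun i => t (m + i)) (1 - δ m) (hδpos m) (hlin m) hb
    refine ⟨f, hf1, fun n hn => ?_⟩
    have e : n = m + (n - m) := by omega
    rw [e]
    exact hf2 (n - m)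
  -- the ultrafilter and the cluster point ξ
  set U : Ultrafilter ℕ := Ultrafilter.of atTop with hUdef
  have hU : (U : Filter ℕ) ≤ atTop := Ultrafilter.of_le _
  obtain ⟨ξ, hξ1, hξlim⟩ := Stmt6Aux.exists_xi U x hxb
  have htail : ∀ N : ℕ, {n | N ≤ n} ∈ (U : Filter ℕ) := fun N => hU (Filter.mem_atTop N)
  -- decomposition data
  have hyex : P ξ ∈ Set.range J := by
    have : P ξ ∈ Set.range P := ⟨ξ, rfl⟩
    rwa [hPr] at this
  obtain ⟨y, hy⟩ := hyex
  set s : ℝ := ‖ξ - P ξ‖ with hs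
  have hfix : ∀ z : X, P (J z) = J z := by
    intro z
    have hz : J z ∈ Set.range P := by rw [hPr]; exact ⟨z, rfl⟩
    obtain ⟨w, hw⟩ := hz
    rw [← hw, hP1]
  -- the (**) inequality
  have hstar : ∀ (m K : ℕ) (c : ℕ → ℝ) (β : ℝ),
      (1 - δ m) * ((∑ i ∈ Finset.range K, |c i|) + |β|)
        ≤ ‖(∑ i ∈ Finset.range K, c i • x (m + i)) + β • y‖ + |β| * s := by
    intro m K c β
    set t : ℕ → ℝ := fun n => if n < m + K then (if c (n - m) < 0 then (-1 : ℝ) else 1)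
      else (if β < 0 then (-1 : ℝ) else 1) with htdef
    have ht : ∀ n, |t n| ≤ 1 := by
      intro n
      simp only [htdef]
      split <;> split <;> simp
    obtain ⟨f, hf1, hf2⟩ := hpat m t ht
    set Z : StrongDual ℝ (StrongDual ℝ X) := (∑ i ∈ Finset.range K, c i • J (x (m + i))) + β • ξ with hZdef
    have hξf : ξ f = if β < 0 then (-1 : ℝ) else 1 := by
      refine Stmt6Aux.xi_eval U hU x ξ hξlim f _ (m + K) fun n hn => ?_
      rw [hf2 n (by omega)]
      simp only [htdef]
      rw [if_neg (by omega)]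
    have hZf : Z f = (∑ i ∈ Finset.range K, |c i|) + |β| := by
      have h1 : Z f = (∑ i ∈ Finset.range K, c i * f (x (m + i))) + β * ξ f := by
        simp [hZdef, hJapp]
      rw [h1, hξf]
      congr 1
      · refine Finset.sum_congr rfl fun i hi => ?_
        have hi' := Finset.mem_range.1 hi
        rw [hf2 (m + i) (Nat.le_add_right m i)]
        simp only [htdef]
        rw [if_pos (by omega), Nat.add_sub_cancel_left]
        rcases lt_or_ge (c i) 0 with hc | hc
        · rw [if_pos hc]; rw [abs_of_neg hc]; ring
        · rw [if_neg (not_lt.2 hc), abs_of_nonneg hc, mul_one]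
      · rcases lt_or_ge β 0 with hc | hc
        · rw [if_pos hc, abs_of_neg hc]; ring
        · rw [if_neg (not_lt.2 hc), abs_of_nonneg hc, mul_one]
    have hZlow : (1 - δ m) * ((∑ i ∈ Finset.range K, |c i|) + |β|) ≤ ‖Z‖ := by
      have h2 : |Z f| ≤ ‖Z‖ * ‖f‖ := by
        have := Z.le_opNorm f
        simpa [Real.norm_eq_abs] using this
      have h3 : Z f ≤ ‖Z‖ * (1 / (1 - δ m)) :=
        le_trans (le_abs_self _)
          (le_trans h2 (mul_le_mul_of_nonneg_left hf1 (norm_nonneg Z)))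
      rw [hZf] at h3
      have h4 : (1 - δ m) * ((∑ i ∈ Finset.range K, |c i|) + |β|)
          ≤ (1 - δ m) * (‖Z‖ * (1 / (1 - δ m))) :=
        mul_le_mul_of_nonneg_left h3 (hδpos m).le
      have h5 : (1 - δ m) * (‖Z‖ * (1 / (1 - δ m))) = ‖Z‖ := by
        rw [← mul_assoc, mul_comm (1 - δ m) ‖Z‖, mul_assoc, mul_one_div,
          div_self (ne_of_gt (hδpos m)), mul_one]
      rw [h5] at h4
      exact h4
    have hPZ1 : P Z = (∑ i ∈ Finset.range K, c i • J (x (m + i))) + β • J y := by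
      rw [hZdef, map_add, map_sum, map_smul, hy]
      congr 1
      refine Finset.sum_congr rfl fun i _ => ?_
      rw [map_smul, hfix]
    have hPZ2 : P Z = J ((∑ i ∈ Finset.range K, c i • x (m + i)) + β • y) := by
      rw [hPZ1, map_add, map_sum, map_smul]
      congr 1
      exact Finset.sum_congr rfl fun i _ => by rw [map_smul]
    have hZPZ : Z - P Z = β • (ξ - P ξ) := by
      rw [hPZ1, hZdef, smul_sub β ξ (P ξ), ← hy]
      abel
    have e1 : ‖P Z‖ = ‖(∑ i ∈ Finset.range K, c i • x (m + i)) + β • y‖ := by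
      rw [hPZ2]
      exact hJnorm _
    have e2 : ‖Z - P Z‖ = |β| * s := by
      rw [hZPZ, @norm_smul _ _ _ _ _ NormedSpace.toNormSMulClass β (ξ - P ξ), Real.norm_eq_abs, hs]
    have hnormZ : ‖Z‖ = ‖(∑ i ∈ Finset.range K, c i • x (m + i)) + β • y‖ + |β| * s := by
      rw [hP2 Z, e1, e2]
    rw [hnormZ] at hZlow
    exact hZlow
  -- the singular part has norm at least one
  have hs1 : 1 ≤ s := by
    by_contra hcon
    push_neg at hcon
    obtain ⟨m, hm⟩ := (hδlim.eventually_lt_const (by linarith : (0 : ℝ) < 1 - s)).exists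
    have hslt : s < 1 - δ m := by linarith
    obtain ⟨f, hfn, hfx, hfy⟩ := Stmt6Aux.exists_norming_functional x (δ m) (hδpos m) y s
      (norm_nonneg (ξ - P ξ)) hslt m (fun K c β => hstar m K c β)
    have hξf : ξ f = 1 := by
      refine Stmt6Aux.xi_eval U hU x ξ hξlim f 1 m fun n hn => ?_
      have e : n = m + (n - m) := by omega
      rw [e]
      exact hfx (n - m)
    have h1 : (ξ - P ξ) f = 1 := by
      rw [ContinuousLinearMap.sub_apply, hξf, ← hy, hJapp, hfy, sub_zero]
    have h2 : |(ξ - P ξ) f| ≤ s * (1 / (1 - δ m)) := by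
      have := (ξ - P ξ).le_opNorm f
      rw [← hs] at this
      refine le_trans (by simpa [Real.norm_eq_abs] using this)
        (mul_le_mul_of_nonneg_left hfn ?_)
      rw [hs]; exact norm_nonneg (ξ - P ξ)
    rw [h1, abs_one, mul_one_div] at h2
    have h3 : 1 * (1 - δ m) ≤ s := (le_div_iff₀ (hδpos m)).1 h2
    linarith
  -- P ξ = 0 and ‖ξ‖ ≥ 1
  have hPξ : P ξ = 0 := by
    have h1 : ‖ξ‖ = ‖P ξ‖ + s := by rw [hP2 ξ, hs]
    have h2 : ‖P ξ‖ ≤ 0 := by linarith [hξ1]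
    exact (ContinuousLinearMap.opNorm_zero_iff (P ξ)).1 (le_antisymm h2 (norm_nonneg _))
  have hξn : 1 ≤ ‖ξ‖ := by
    have : s = ‖ξ‖ := by rw [hs, hPξ, sub_zero ξ]
    linarith
  -- the core inequality
  have hcore : ∀ (w0 : X) (t ε : ℝ), 0 < ε →
      {n | ‖w0‖ + |t| - ε < ‖w0 + t • x n‖} ∈ (U : Filter ℕ) := by
    intro w0 t ε hε
    by_contra hconm
    have hKmem : {n | ‖w0 + t • x n‖ ≤ ‖w0‖ + |t| - ε} ∈ (U : Filter ℕ) := by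
      have h1 := (Ultrafilter.compl_mem_iff_notMem).2 hconm
      have e : {n | ‖w0‖ + |t| - ε < ‖w0 + t • x n‖}ᶜ
          = {n | ‖w0 + t • x n‖ ≤ ‖w0‖ + |t| - ε} := by
        ext n; simp [not_lt]
      rwa [e] at h1
    rcases le_or_gt 0 (‖w0‖ + |t| - ε) with hc | hc
    · have hWlim : ∀ f : StrongDual ℝ X,
          Tendsto (fun n => f (w0 + t • x n)) (U : Filter ℕ) (nhds ((J w0 + t • ξ) f)) := by
        intro f
        have h1 : Tendsto (fun n => f w0 + t * f (x n)) (U : Filter ℕ)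
            (nhds (f w0 + t * ξ f)) := tendsto_const_nhds.add ((hξlim f).const_mul t)
        have e2 : (J w0 + t • ξ) f = f w0 + t * ξ f := by
          rw [ContinuousLinearMap.add_apply, ContinuousLinearMap.smul_apply, hJapp,
            smul_eq_mul]
        rw [e2]
        refine h1.congr fun n => ?_
        rw [map_add, map_smul, smul_eq_mul]
      have hWle : ‖J w0 + t • ξ‖ ≤ ‖w0‖ + |t| - ε :=
        Stmt6Aux.norm_bidual_le U (fun n => w0 + t • x n) (J w0 + t • ξ) hWlim _ hc hKmem
      have hPW : P (J w0 + t • ξ) = J w0 := by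
        rw [map_add, map_smul, hfix, hPξ, smul_zero, add_zero]
      have hWPW : J w0 + t • ξ - P (J w0 + t • ξ) = t • ξ := by
        rw [hPW, add_sub_cancel_left (J w0) (t • ξ)]
      have hWdec : ‖J w0 + t • ξ‖ = ‖w0‖ + |t| * ‖ξ‖ := by
        rw [hP2 (J w0 + t • ξ), hWPW, hPW, hJnorm, @norm_smul _ _ _ _ _ NormedSpace.toNormSMulClass t ξ, Real.norm_eq_abs]
      have h7 : ‖w0‖ + |t| * 1 ≤ ‖w0‖ + |t| * ‖ξ‖ := by
        have := mul_le_mul_of_nonneg_left hξn (abs_nonneg t)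
        linarith
      rw [hWdec] at hWle
      linarith
    · have he : {n | ‖w0 + t • x n‖ ≤ ‖w0‖ + |t| - ε} = (∅ : Set ℕ) := by
        ext n
        simp only [Set.mem_setOf_eq, Set.mem_empty_iff_false, iff_false, not_le]
        calc ‖w0‖ + |t| - ε < 0 := hc
        _ ≤ ‖w0 + t • x n‖ := norm_nonneg _
      rw [he] at hKmem
      exact Filter.empty_notMem _ hKmem
  -- parameters for the recursion
  set ε' : ℕ → ℝ := fun j => (1/2 : ℝ)^j / 4 with hε'def
  have hε'pos : ∀ j, 0 < ε' j := fun j => by positivity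
  -- base step
  have hbase : ∃ n0 : ℕ, ∀ T : ℝ, |T| - ε' 0 * |T| ≤ ‖T • x n0‖ := by
    obtain ⟨n, _, hn2⟩ := Stmt6Aux.keystep x hxb (U : Filter ℕ) htail hcore 0
      (fun i => i.elim0) (fun i => i.elim0) (ε' 0) (hε'pos 0) 0
    refine ⟨n, fun T => ?_⟩
    have := hn2 (fun i => i.elim0) T
    simpa using this
  -- inductive step
  have hstepex : ∀ (g : ℕ → ℕ) (j : ℕ), ∃ n, g j < n ∧ ∀ (α : ℕ → ℝ) (T : ℝ),
      ‖∑ i ∈ Finset.range (j+1), α i • x (g i)‖ + |T|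
        - ε' (j+1) * ((∑ i ∈ Finset.range (j+1), |α i|) + |T|)
        ≤ ‖(∑ i ∈ Finset.range (j+1), α i • x (g i)) + T • x n‖ := by
    intro g j
    obtain ⟨n, hn1, hn2⟩ := Stmt6Aux.keystep x hxb (U : Filter ℕ) htail hcore (j+1)
      (fun i : Fin (j+1) => x (g i.val)) (fun i => hxb _) (ε' (j+1)) (hε'pos _) (g j + 1)
    refine ⟨n, by omega, fun α T => ?_⟩
    have h3 := hn2 (fun i : Fin (j+1) => α i.val) T
    have e1 : ∑ i : Fin (j+1), α i.val • x (g i.val)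
        = ∑ i ∈ Finset.range (j+1), α i • x (g i) :=
      Fin.sum_univ_eq_sum_range (fun i => α i • x (g i)) (j+1)
    have e2 : ∑ i : Fin (j+1), |α i.val| = ∑ i ∈ Finset.range (j+1), |α i| :=
      Fin.sum_univ_eq_sum_range (fun i => |α i|) (j+1)
    rw [← e1, ← e2]
    exact h3
  -- the subsequence
  set st : (ℕ → ℕ) → ℕ → ℕ := fun g j' => Classical.choose (hstepex g j') with hstdef
  set b0 : ℕ := Classical.choose hbase with hb0def
  set k : ℕ → ℕ := fun i => Stmt6Aux.preAux b0 st i i with hkdef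
  have hksucc : ∀ j', k (j'+1) = st (fun i => Stmt6Aux.preAux b0 st j' i) j' := by
    intro j'
    show Stmt6Aux.preAux b0 st (j'+1) (j'+1) = _
    rw [Stmt6Aux.preAux_succ, if_neg (Nat.not_succ_le_self j')]
  have hspec : ∀ j', (k j' < k (j'+1)) ∧ ∀ (α : ℕ → ℝ) (T : ℝ),
      ‖∑ i ∈ Finset.range (j'+1), α i • x (k i)‖ + |T|
        - ε' (j'+1) * ((∑ i ∈ Finset.range (j'+1), |α i|) + |T|)
        ≤ ‖(∑ i ∈ Finset.range (j'+1), α i • x (k i)) + T • x (k (j'+1))‖ := by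
    intro j'
    have hc := Classical.choose_spec (hstepex (fun i => Stmt6Aux.preAux b0 st j' i) j')
    have hee : ∀ (c : ℕ → ℝ), ∑ i ∈ Finset.range (j'+1), c i • x (Stmt6Aux.preAux b0 st j' i)
        = ∑ i ∈ Finset.range (j'+1), c i • x (k i) := fun c =>
      Finset.sum_congr rfl fun i hi => by
        rw [Stmt6Aux.preAux_agree b0 st j' i (Nat.lt_succ_iff.1 (Finset.mem_range.1 hi))]
    constructor
    · rw [hksucc j']
      exact hc.1
    · intro α T
      have h2 := hc.2 α T
      rw [hee α] at h2
      rw [hksucc j']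
      exact h2
  have hkmono : StrictMono k := strictMono_nat_of_lt_succ fun j' => (hspec j').1
  -- main lower estimate along the subsequence
  have hmain : ∀ (N : ℕ) (α : ℕ → ℝ),
      (∑ i ∈ Finset.range N, |α i|)
        - (∑ j ∈ Finset.range N, ε' j * ∑ i ∈ Finset.range (j+1), |α i|)
        ≤ ‖∑ i ∈ Finset.range N, α i • x (k i)‖ := by
    intro N
    induction N with
    | zero => intro α; simp
    | succ M IH =>
      intro α
      cases M with
      | zero =>
        have hb := Classical.choose_spec hbase (α 0)
        rw [Finset.sum_range_one, Finset.sum_range_one, Finset.sum_range_one,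
          Finset.sum_range_one]
        exact hb
      | succ j' =>
        have hstep := (hspec j').2 α (α (j'+1))
        have hIH := IH α
        have e1 : ∑ i ∈ Finset.range (j'+1+1), α i • x (k i)
            = (∑ i ∈ Finset.range (j'+1), α i • x (k i)) + α (j'+1) • x (k (j'+1)) :=
          Finset.sum_range_succ _ _
        have e2 : ∑ i ∈ Finset.range (j'+1+1), |α i|
            = (∑ i ∈ Finset.range (j'+1), |α i|) + |α (j'+1)| :=
          Finset.sum_range_succ _ _
        have e3 : ∑ j ∈ Finset.range (j'+1+1), ε' j * ∑ i ∈ Finset.range (j+1), |α i|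
            = (∑ j ∈ Finset.range (j'+1), ε' j * ∑ i ∈ Finset.range (j+1), |α i|)
              + ε' (j'+1) * ∑ i ∈ Finset.range (j'+1+1), |α i| :=
          Finset.sum_range_succ _ _
        rw [e1, e3, e2]
        linarith
  -- geometric bookkeeping
  set δ' : ℕ → ℝ := fun i => (1/2 : ℝ)^i / 2 with hδ'def
  have hgeo : ∀ (i N : ℕ), ∑ j ∈ Finset.Ico i N, ε' j ≤ δ' i := by
    intro i N
    have h1 : ∑ j ∈ Finset.Ico i N, (1/2 : ℝ)^j ≤ (1/2 : ℝ)^i / (1 - 1/2) :=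
      geom_sum_Ico_le_of_lt_one (x := (1/2 : ℝ)) (by norm_num) (by norm_num)
    have h2 : ∑ j ∈ Finset.Ico i N, ε' j = (∑ j ∈ Finset.Ico i N, (1/2 : ℝ)^j) / 4 := by
      rw [hε'def, ← Finset.sum_div]
    rw [h2, hδ'def]
    have h3 : (1/2 : ℝ)^i / (1 - 1/2) = 2 * (1/2 : ℝ)^i := by
      rw [show (1 : ℝ) - 1/2 = 1/2 by norm_num, div_div_eq_mul_div, div_eq_mul_inv]
      ring
    rw [h3] at h1
    linarith [pow_nonneg (by norm_num : (0:ℝ) ≤ 1/2) i]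
  have hswap : ∀ (N : ℕ) (α : ℕ → ℝ),
      ∑ j ∈ Finset.range N, ε' j * ∑ i ∈ Finset.range (j+1), |α i|
        ≤ ∑ i ∈ Finset.range N, δ' i * |α i| := by
    intro N α
    have hIR : ∀ n : ℕ, Finset.Ico 0 n = Finset.range n := fun n =>
      Nat.Ico_zero_eq_range n
    have e1 : ∑ j ∈ Finset.range N, ε' j * ∑ i ∈ Finset.range (j+1), |α i|
        = ∑ j ∈ Finset.Ico 0 N, ∑ i ∈ Finset.Ico 0 (j+1), ε' j * |α i| := by
      rw [hIR N]
      refine Finset.sum_congr rfl fun j _ => ?_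
      rw [Finset.mul_sum, hIR (j+1)]
    have e2 : ∑ j ∈ Finset.Ico 0 N, ∑ i ∈ Finset.Ico 0 (j+1), ε' j * |α i|
        = ∑ i ∈ Finset.Ico 0 N, ∑ j ∈ Finset.Ico i N, ε' j * |α i| :=
      (Finset.sum_Ico_Ico_comm 0 N fun i j => ε' j * |α i|).symm
    rw [e1, e2, hIR N]
    refine Finset.sum_le_sum fun i _ => ?_
    have h4 : ∑ j ∈ Finset.Ico i N, ε' j * |α i|
        = (∑ j ∈ Finset.Ico i N, ε' j) * |α i| := by
      rw [Finset.sum_mul]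
    rw [h4]
    exact mul_le_mul_of_nonneg_right (hgeo i N) (abs_nonneg _)
  -- conclusion
  refine ⟨k, hkmono, δ', ?_, ?_, ?_⟩
  · intro n
    constructor
    · positivity
    · have h1 : ((1:ℝ)/2)^n ≤ 1 := pow_le_one₀ (by norm_num) (by norm_num)
      rw [hδ'def]
      simp only
      linarith
  · have h1 : Tendsto (fun n : ℕ => ((1:ℝ)/2)^n) atTop (nhds 0) :=
      tendsto_pow_atTop_nhds_zero_of_lt_one (by norm_num) (by norm_num)
    have h2 := h1.div_const 2
    rw [zero_div] at h2
    exact h2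
  · intro N α
    constructor
    · have e4 : ∑ n ∈ Finset.range N, (1 - δ' n) * |α n|
          = (∑ n ∈ Finset.range N, |α n|) - ∑ n ∈ Finset.range N, δ' n * |α n| := by
        rw [← Finset.sum_sub_distrib]
        exact Finset.sum_congr rfl fun n _ => by ring
      have h5 := hswap N α
      have h6 := hmain N α
      have e7 : ∑ n ∈ Finset.range N, α n • (x ∘ k) n
          = ∑ n ∈ Finset.range N, α n • x (k n) := rfl
      rw [e4, e7]
      linarith
    · have e7 : ∑ n ∈ Finset.range N, α n • (x ∘ k) n
          = ∑ n ∈ Finset.range N, α n • x (k n) := rfl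
      rw [e7]
      calc ‖∑ n ∈ Finset.range N, α n • x (k n)‖
          ≤ ∑ n ∈ Finset.range N, ‖α n • x (k n)‖ := norm_sum_le _ _
      _ ≤ ∑ n ∈ Finset.range N, |α n| := by
          refine Finset.sum_le_sum fun n _ => ?_
          rw [norm_smul, Real.norm_eq_abs]
          calc |α n| * ‖x (k n)‖ ≤ |α n| * 1 :=
                mul_le_mul_of_nonneg_left (hxb (k n)) (abs_nonneg _)
          _ = |α n| := mul_one _
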